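/- If T is a spanning tree of a connected non-tree graph G in which every vertex has odd degree, and e = uv ∈ E(G) \ E(T), and w is the neighbour of u on the path in T from u to v, then T − uw + e is a spanning tree of G with exactly two vertices of even degree, namely v and w. -/

import Mathlib

open SimpleGraph

/-- If T is a spanning tree, with all degrees odd, of a connected non-tree graph G,
e = uv ∈ E(G) \ E(T), and w is the neighbour of u on the u–v path in T, then
T − uw + uv is a spanning tree of G whose even-degree vertices are exactly v and w. -/
theorem stmt15 {V : Type*} [Fintype V] (G : SimpleGraph V)
    (hG : G.Connected) (hnt : ¬ G.IsTree)
    (T : SimpleGraph V) (hTG : T ≤ G) (hT : T.IsTree)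
    (hodd : ∀ x : V, Odd ((T.neighborSet x).ncard))
    (u v : V) (huv : G.Adj u v) (he : s(u, v) ∉ T.edgeSet)
    (p : T.Walk u v) (hp : p.IsPath) (w : V) (hw : w = p.getVert 1) :
    ((T.deleteEdges {s(u, w)}) ⊔ SimpleGraph.fromEdgeSet {s(u, v)}) ≤ G ∧
    ((T.deleteEdges {s(u, w)}) ⊔ SimpleGraph.fromEdgeSet {s(u, v)}).IsTree ∧
    v ≠ w ∧
    ∀ x : V,
      Even ((((T.deleteEdges {s(u, w)}) ⊔
        SimpleGraph.fromEdgeSet {s(u, v)}).neighborSet x).ncard) ↔ (x = v ∨ x = w) := by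
  classical
  set T' := (T.deleteEdges {s(u, w)}) ⊔ SimpleGraph.fromEdgeSet {s(u, v)} with hT'def
  have he' : ¬ T.Adj u v := fun h => he (T.mem_edgeSet.mpr h)
  have huvne : u ≠ v := huv.ne
  -- destructure the path
  cases p with
  | nil => exact absurd rfl huvne
  | @cons _ b _ h q =>
    have hwb : w = b := by simpa [SimpleGraph.Walk.getVert_cons_succ] using hw
    subst hwb
    have huw : T.Adj u w := h
    have hvw : v ≠ w := by
      rintro rfl
      exact he' huw
    have hquw : s(u, w) ∉ q.edges := by
      have := hp.isTrail.edges_nodup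
      simp only [SimpleGraph.Walk.edges_cons, List.nodup_cons] at this
      exact this.1
    -- adjacency in T'
    have hadj : ∀ x y : V, T'.Adj x y ↔
        (T.Adj x y ∧ s(x, y) ≠ s(u, w)) ∨ (s(x, y) = s(u, v) ∧ x ≠ y) := by
      intro x y
      simp [hT'def, SimpleGraph.deleteEdges_adj, SimpleGraph.fromEdgeSet_adj]
    -- T' ≤ G
    have hle : T' ≤ G := by
      intro a b hab
      rcases (hadj a b).1 hab with ⟨h1, _⟩ | ⟨h2, _⟩
      · exact hTG h1
      · rw [Sym2.eq_iff] at h2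
        rcases h2 with ⟨rfl, rfl⟩ | ⟨rfl, rfl⟩
        · exact huv
        · exact huv.symm
    -- connectivity
    have hqdel : ∀ e ∈ q.edges, e ∉ ({s(u, w)} : Set (Sym2 V)) := by
      intro e heq hmem
      rw [Set.mem_singleton_iff] at hmem
      exact hquw (hmem ▸ heq)
    have hle1 : T.deleteEdges {s(u, w)} ≤ T' := le_sup_left
    have reach_wv : T'.Reachable w v :=
      SimpleGraph.Reachable.mono hle1 (q.toDeleteEdges {s(u, w)} hqdel).reachable
    have adj_uv : T'.Adj u v := (hadj u v).2 (Or.inr ⟨rfl, huvne⟩)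
    have reach_uw : T'.Reachable u w := adj_uv.reachable.trans reach_wv.symm
    have hkey : ∀ a b : V, T.Adj a b → T'.Reachable a b := by
      intro a b hab
      by_cases hcase : s(a, b) = s(u, w)
      · rw [Sym2.eq_iff] at hcase
        rcases hcase with ⟨rfl, rfl⟩ | ⟨rfl, rfl⟩
        · exact reach_uw
        · exact reach_uw.symm
      · exact ((hadj a b).2 (Or.inl ⟨hab, hcase⟩)).reachable
    have hconn : T'.Connected := by
      have hpre : T'.Preconnected := by
        intro a b
        obtain ⟨r⟩ := hT.isConnected.preconnected a b
        induction r with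
        | nil => rfl
        | cons hstep r ih => exact (hkey _ _ hstep).trans ih
      haveI : Nonempty V := hT.isConnected.nonempty
      exact SimpleGraph.Connected.mk hpre
    -- acyclicity
    have hacyc : T'.IsAcyclic := by
      intro x c hc
      by_cases hcase : s(u, v) ∈ c.edges
      · have hcyc : ∃ (y : V) (c' : T'.Walk y y), c'.IsCycle ∧ s(u, v) ∈ c'.edges := ⟨x, c, hc, hcase⟩
        rw [← SimpleGraph.adj_and_reachable_delete_edges_iff_exists_cycle] at hcyc
        obtain ⟨_, hreach⟩ := hcyc
        have hle2 : T'.deleteEdges {s(u, v)} ≤ T.deleteEdges {s(u, w)} := by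
          intro a b hab
          obtain ⟨hab1, hab2⟩ := (SimpleGraph.deleteEdges_adj.mp hab)
          rcases (hadj a b).1 hab1 with ⟨h1, h2⟩ | ⟨h2, _⟩
          · exact SimpleGraph.deleteEdges_adj.mpr ⟨h1, by simpa using h2⟩
          · exact absurd (by simpa using h2) hab2
        obtain ⟨r⟩ := hreach.mono hle2
        set r2 := r.toPath with hr2
        have hr2edges : ∀ e ∈ (r2 : (T.deleteEdges {s(u, w)}).Walk u v).edges,
            e ∈ T.edgeSet := by
          intro e heq
          have := (r2 : (T.deleteEdges {s(u, w)}).Walk u v).edges_subset_edgeSet heq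
          rw [SimpleGraph.edgeSet_deleteEdges] at this
          exact this.1
        have hr2not : s(u, w) ∉ (r2 : (T.deleteEdges {s(u, w)}).Walk u v).edges := by
          intro heq
          have := (r2 : (T.deleteEdges {s(u, w)}).Walk u v).edges_subset_edgeSet heq
          rw [SimpleGraph.edgeSet_deleteEdges] at this
          exact this.2 rfl
        set r3 := (r2 : (T.deleteEdges {s(u, w)}).Walk u v).transfer T hr2edges with hr3
        have hr3path : r3.IsPath := r2.2.transfer hr2edges
        have hr3not : s(u, w) ∉ r3.edges := by
          rwa [hr3, SimpleGraph.Walk.edges_transfer]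
        have huniq := hT.existsUnique_path u v
        obtain ⟨P, _, hPuniq⟩ := huniq
        have e1 : SimpleGraph.Walk.cons h q = P := hPuniq _ hp
        have e2 : r3 = P := hPuniq _ hr3path
        apply hr3not
        rw [e2, ← e1]
        simp
      · have hcT : ∀ e ∈ c.edges, e ∈ T.edgeSet := by
          intro e heq
          have hmem := c.edges_subset_edgeSet heq
          have hne : e ≠ s(u, v) := fun hh => hcase (hh ▸ heq)
          rw [hT'def] at hmem
          simp only [SimpleGraph.edgeSet_sup, SimpleGraph.edgeSet_deleteEdges,
            SimpleGraph.edgeSet_fromEdgeSet, Set.mem_union, Set.mem_diff,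
            Set.mem_singleton_iff, Set.mem_setOf_eq] at hmem
          rcases hmem with ⟨h1, _⟩ | ⟨h1, _⟩
          · exact h1
          · exact absurd h1 hne
        exact hT.IsAcyclic (c.transfer T hcT) (hc.transfer hcT)
    refine ⟨hle, ⟨hconn, hacyc⟩, hvw, ?_⟩
    -- degrees
    have hvu : v ≠ u := huvne.symm
    have huwne : u ≠ w := huw.ne
    have he2 : ¬ T.Adj v u := fun hh => he' hh.symm
    have hwu : T.Adj w u := huw.symm
    intro x
    by_cases hxv : x = v
    · subst hxv
      have hNv : T'.neighborSet x = insert u (T.neighborSet x) := by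
        ext y
        rw [Set.mem_insert_iff]
        simp only [SimpleGraph.mem_neighborSet]
        constructor
        · intro hy
          rcases (hadj x y).1 hy with ⟨h1, _⟩ | ⟨h2, _⟩
          · exact Or.inr h1
          · rcases Sym2.eq_iff.mp h2 with ⟨h3, _⟩ | ⟨_, h4⟩
            · exact absurd h3 hvu
            · exact Or.inl h4
        · rintro (rfl | h1)
          · exact (hadj x y).2 (Or.inr ⟨Sym2.eq_iff.mpr (Or.inr ⟨rfl, rfl⟩), hvu⟩)
          · refine (hadj x y).2 (Or.inl ⟨h1, fun hh => ?_⟩)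
            rcases Sym2.eq_iff.mp hh with ⟨h3, _⟩ | ⟨h3, _⟩
            · exact hvu h3
            · exact hvw h3
      have hnm : u ∉ T.neighborSet x := fun hh => he2 hh
      rw [hNv, Set.ncard_insert_of_notMem hnm (Set.toFinite _)]
      simpa using (hodd x).add_one
    · by_cases hxw : x = w
      · subst hxw
        have hNw : T'.neighborSet x = T.neighborSet x \ {u} := by
          ext y
          rw [Set.mem_diff, Set.mem_singleton_iff]
          simp only [SimpleGraph.mem_neighborSet]
          constructor
          · intro hy
            rcases (hadj x y).1 hy with ⟨h1, h2⟩ | ⟨h2, _⟩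
            · refine ⟨h1, fun hh => ?_⟩
              exact h2 (hh ▸ Sym2.eq_iff.mpr (Or.inr ⟨rfl, rfl⟩))
            · rcases Sym2.eq_iff.mp h2 with ⟨h3, _⟩ | ⟨h3, _⟩
              · exact absurd h3.symm huwne
              · exact absurd h3.symm hvw
          · rintro ⟨h1, h2⟩
            refine (hadj x y).2 (Or.inl ⟨h1, fun hh => ?_⟩)
            rcases Sym2.eq_iff.mp hh with ⟨h3, _⟩ | ⟨_, h4⟩
            · exact huwne h3.symm
            · exact h2 h4
        have hmem : u ∈ T.neighborSet x := hwu
        rw [hNw, Set.ncard_diff_singleton_of_mem hmem]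
        simp only [hvw.symm, or_true, iff_true]
        exact Nat.Odd.sub_odd (hodd x) odd_one
      · by_cases hxu : x = u
        · subst hxu
          have hNu : T'.neighborSet x = insert v (T.neighborSet x \ {w}) := by
            ext y
            rw [Set.mem_insert_iff, Set.mem_diff, Set.mem_singleton_iff]
            simp only [SimpleGraph.mem_neighborSet]
            constructor
            · intro hy
              rcases (hadj x y).1 hy with ⟨h1, h2⟩ | ⟨h2, _⟩
              · refine Or.inr ⟨h1, fun hh => ?_⟩
                exact h2 (hh ▸ Sym2.eq_iff.mpr (Or.inl ⟨rfl, rfl⟩))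
              · rcases Sym2.eq_iff.mp h2 with ⟨_, h4⟩ | ⟨h3, _⟩
                · exact Or.inl h4
                · exact absurd h3 huvne
            · rintro (rfl | ⟨h1, h2⟩)
              · exact (hadj x y).2 (Or.inr ⟨Sym2.eq_iff.mpr (Or.inl ⟨rfl, rfl⟩), huvne⟩)
              · refine (hadj x y).2 (Or.inl ⟨h1, fun hh => ?_⟩)
                rcases Sym2.eq_iff.mp hh with ⟨_, h4⟩ | ⟨h3, _⟩
                · exact h2 h4
                · exact huwne h3
          have hnm : v ∉ T.neighborSet x \ {w} := fun hh => he' hh.1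
          have hmem : w ∈ T.neighborSet x := huw
          have hpos : 0 < (T.neighborSet x).ncard := (hodd x).pos
          rw [hNu, Set.ncard_insert_of_notMem hnm (Set.toFinite _),
            Set.ncard_diff_singleton_of_mem hmem,
            Nat.sub_add_cancel hpos]
          simp only [hxv, hxw, or_self, iff_false]
          exact Nat.not_even_iff_odd.mpr (hodd x)
        · have hNx : T'.neighborSet x = T.neighborSet x := by
            ext y
            simp only [SimpleGraph.mem_neighborSet]
            constructor
            · intro hy
              rcases (hadj x y).1 hy with ⟨h1, _⟩ | ⟨h2, _⟩
              · exact h1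
              · rcases Sym2.eq_iff.mp h2 with ⟨h3, _⟩ | ⟨h3, _⟩
                · exact absurd h3 hxu
                · exact absurd h3 hxv
            · intro h1
              refine (hadj x y).2 (Or.inl ⟨h1, fun hh => ?_⟩)
              rcases Sym2.eq_iff.mp hh with ⟨h3, _⟩ | ⟨h3, _⟩
              · exact hxu h3
              · exact hxw h3
          rw [hNx]
          simp only [hxv, hxw, or_self, iff_false]
          exact Nat.not_even_iff_odd.mpr (hodd x)
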